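/- The value of an infinite semi-regular continued fraction α = b_0 + a_1/(b_1 + a_2/(b_2 + ⋯)) with a_n ∈ {-1,1}, b_n ≥ 1 integers, b_n + a_{n+1} ≥ 1 for all n ≥ 1, and b_n + a_{n+1} ≥ 2 infinitely often, is irrational. -/

import Mathlib

@[elab_as_elim]
private lemma intLeInduction {m : ℤ} {P : ∀ n : ℤ, m ≤ n → Prop} (base : P m le_rfl)
    (succ : ∀ n (hmn : m ≤ n), P n hmn → P (n + 1) (by omega)) : ∀ n hmn, P n hmn := by
  have h : ∀ n : ℤ, m ≤ n → ∀ h : m ≤ n, P n h :=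
    Int.le_induction (fun _ => base) (fun n hn ih _ => succ n hn (ih hn))
  exact fun n hn => h n hn hn

private lemma srcf_pos (a b Q : ℤ → ℤ) (N : ℤ)
    (hb : ∀ n : ℤ, 1 ≤ n → 1 ≤ b n)
    (hba : ∀ n : ℤ, 1 ≤ n → 1 ≤ b n + a (n + 1))
    (hN : -1 ≤ N)
    (hQ0 : Q N = 0) (hQ1 : Q (N + 1) = 1)
    (hrec : ∀ m : ℤ, N + 2 ≤ m → Q m = b m * Q (m - 1) + a m * Q (m - 2)) :
    ∀ m : ℤ, N + 1 ≤ m → 1 ≤ Q m ∧ 1 ≤ Q m + a (m + 1) * Q (m - 1) := by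
  intro m hm
  induction m, hm using intLeInduction with
  | base =>
      rw [show N + 1 - 1 = N from by ring, hQ0, hQ1]
      simp
  | succ m hm ih =>
      obtain ⟨ih1, ih2⟩ := ih
      have hm1 : (1:ℤ) ≤ m + 1 := by linarith
      have hr := hrec (m + 1) (by linarith)
      rw [show m + 1 - 1 = m from by ring, show m + 1 - 2 = m - 1 from by ring] at hr
      have hb1 := hb (m + 1) hm1
      have hba1 := hba (m + 1) hm1
      constructor
      · rw [hr]
        nlinarith [mul_nonneg (by linarith : (0:ℤ) ≤ b (m + 1) - 1)
          (by linarith : (0:ℤ) ≤ Q m)]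
      · rw [show m + 1 - 1 = m from by ring, hr]
        nlinarith [mul_nonneg (by linarith : (0:ℤ) ≤ b (m + 1) + a (m + 1 + 1) - 1)
          (by linarith : (0:ℤ) ≤ Q m)]

private lemma srcf_cmp (a b q Q : ℤ → ℤ) (n : ℤ)
    (hb : ∀ m : ℤ, 1 ≤ m → 1 ≤ b m)
    (hba : ∀ m : ℤ, 1 ≤ m → 1 ≤ b m + a (m + 1))
    (hn : 0 ≤ n)
    (hq : ∀ m : ℤ, 1 ≤ m → q m = b m * q (m - 1) + a m * q (m - 2))
    (hqn : 0 ≤ q n)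
    (hQ0 : Q n = 0) (hQ1 : Q (n + 1) = 1)
    (hQrec : ∀ m : ℤ, n + 2 ≤ m → Q m = b m * Q (m - 1) + a m * Q (m - 2)) :
    ∀ m : ℤ, n + 1 ≤ m →
      Q m * (q n + a (n + 1) * q (n - 1)) ≤ q m ∧
      (Q m + a (m + 1) * Q (m - 1)) * (q n + a (n + 1) * q (n - 1))
        ≤ q m + a (m + 1) * q (m - 1) := by
  intro m hm
  induction m, hm using intLeInduction with
  | base =>
      have h1 : (1:ℤ) ≤ n + 1 := by linarith
      have hqr := hq (n + 1) h1
      rw [show n + 1 - 1 = n from by ring, show n + 1 - 2 = n - 1 from by ring] at hqr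
      have hb1 := hb (n + 1) h1
      have hba1 := hba (n + 1) h1
      rw [show n + 1 - 1 = n from by ring, hQ0, hQ1]
      constructor
      · rw [hqr]
        nlinarith [mul_nonneg (by linarith : (0:ℤ) ≤ b (n + 1) - 1) hqn]
      · rw [hqr]
        nlinarith [mul_nonneg (by linarith : (0:ℤ) ≤ b (n + 1) + a (n + 1 + 1) - 1) hqn]
  | succ m hm ih =>
      obtain ⟨ih1, ih2⟩ := ih
      have h1 : (1:ℤ) ≤ m + 1 := by linarith
      have hqr := hq (m + 1) h1
      rw [show m + 1 - 1 = m from by ring, show m + 1 - 2 = m - 1 from by ring] at hqr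
      have hQr := hQrec (m + 1) (by linarith)
      rw [show m + 1 - 1 = m from by ring, show m + 1 - 2 = m - 1 from by ring] at hQr
      have hb1 := hb (m + 1) h1
      have hba1 := hba (m + 1) h1
      constructor
      · rw [hqr, hQr]
        nlinarith [mul_nonneg (by linarith : (0:ℤ) ≤ b (m + 1) - 1)
          (sub_nonneg.mpr ih1)]
      · rw [show m + 1 - 1 = m from by ring, hqr, hQr]
        nlinarith [mul_nonneg (by linarith : (0:ℤ) ≤ b (m + 1) + a (m + 1 + 1) - 1)
          (sub_nonneg.mpr ih1)]

private lemma srcf_det (a b p q : ℤ → ℤ)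
    (ha : ∀ n : ℤ, 1 ≤ n → a n = 1 ∨ a n = -1)
    (hpm1 : p (-1) = 1) (hp0 : p 0 = b 0)
    (hp : ∀ n : ℤ, 1 ≤ n → p n = b n * p (n - 1) + a n * p (n - 2))
    (hqm1 : q (-1) = 0) (hq0 : q 0 = 1)
    (hq : ∀ n : ℤ, 1 ≤ n → q n = b n * q (n - 1) + a n * q (n - 2)) :
    ∀ n : ℤ, 0 ≤ n →
      p (n + 1) * q n - p n * q (n + 1) = 1 ∨ p (n + 1) * q n - p n * q (n + 1) = -1 := by
  intro n hn
  induction n, hn using intLeInduction with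
  | base =>
      have hp1 := hp 1 le_rfl
      have hq1 := hq 1 le_rfl
      rw [show (1:ℤ) - 1 = 0 from by norm_num, show (1:ℤ) - 2 = -1 from by norm_num]
        at hp1 hq1
      rcases ha 1 le_rfl with h | h
      · left
        rw [show (0:ℤ) + 1 = 1 from by norm_num, hp1, hq1, hp0, hpm1, hq0, hqm1, h]
        ring
      · right
        rw [show (0:ℤ) + 1 = 1 from by norm_num, hp1, hq1, hp0, hpm1, hq0, hqm1, h]
        ring
  | succ n hn ih =>
      have h2 : (1:ℤ) ≤ n + 2 := by linarith
      have hp2 := hp (n + 2) h2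
      have hq2 := hq (n + 2) h2
      rw [show n + 2 - 1 = n + 1 from by ring, show n + 2 - 2 = n from by ring] at hp2 hq2
      have key : p (n + 1 + 1) * q (n + 1) - p (n + 1) * q (n + 1 + 1)
          = -a (n + 2) * (p (n + 1) * q n - p n * q (n + 1)) := by
        rw [show n + 1 + 1 = n + 2 from by ring, hp2, hq2]; ring
      rcases ha (n + 2) (by linarith) with h | h <;> rcases ih with h2' | h2' <;>
        rw [key, h, h2'] <;> norm_num

theorem srcf_value_irrational (a b p q : ℤ → ℤ) (α : ℝ)
    (ha : ∀ n : ℤ, 1 ≤ n → a n = 1 ∨ a n = -1)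
    (hb : ∀ n : ℤ, 1 ≤ n → 1 ≤ b n)
    (hba : ∀ n : ℤ, 1 ≤ n → 1 ≤ b n + a (n + 1))
    (hba2 : ∀ N : ℤ, ∃ n : ℤ, N ≤ n ∧ 1 ≤ n ∧ 2 ≤ b n + a (n + 1))
    (hpm1 : p (-1) = 1) (hp0 : p 0 = b 0)
    (hp : ∀ n : ℤ, 1 ≤ n → p n = b n * p (n - 1) + a n * p (n - 2))
    (hqm1 : q (-1) = 0) (hq0 : q 0 = 1)
    (hq : ∀ n : ℤ, 1 ≤ n → q n = b n * q (n - 1) + a n * q (n - 2))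
    (hqinf : Filter.Tendsto (fun n : ℕ => q (n : ℤ)) Filter.atTop Filter.atTop)
    (hconv : Filter.Tendsto (fun n : ℕ => (p (n : ℤ) : ℝ) / (q (n : ℤ) : ℝ))
      Filter.atTop (nhds α)) :
    Irrational α := by
  -- positivity of q and of r m := q m + a (m+1) q (m-1)
  have hqp : ∀ m : ℤ, 0 ≤ m → 1 ≤ q m ∧ 1 ≤ q m + a (m + 1) * q (m - 1) := by
    intro m hm
    refine srcf_pos a b q (-1) hb hba (by norm_num) (by simpa using hqm1) ?_ ?_ m (by linarith)
    · norm_num [hq0]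
    · intro k hk; exact hq k (by linarith)
  -- monotonicity of r
  have hrmono : ∀ M : ℤ, 0 ≤ M → ∀ m : ℤ, M ≤ m →
      q M + a (M + 1) * q (M - 1) ≤ q m + a (m + 1) * q (m - 1) := by
    intro M hM m hm
    induction m, hm using intLeInduction with
    | base => exact le_rfl
    | succ m hm ih =>
        have h1 : (1:ℤ) ≤ m + 1 := by linarith
        have hr := hq (m + 1) h1
        rw [show m + 1 - 1 = m from by ring, show m + 1 - 2 = m - 1 from by ring] at hr
        have hqm := (hqp m (by linarith)).1
        have hba1 := hba (m + 1) h1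
        rw [show m + 1 - 1 = m from by ring, hr]
        nlinarith [mul_nonneg (by linarith : (0:ℤ) ≤ b (m + 1) + a (m + 1 + 1) - 1)
          (by linarith : (0:ℤ) ≤ q m)]
  -- divergence of r
  have hrdiv : ∀ K : ℕ, ∃ M : ℤ, 0 ≤ M ∧ (K : ℤ) ≤ q M + a (M + 1) * q (M - 1) := by
    intro K
    induction K with
    | zero =>
        refine ⟨0, le_rfl, ?_⟩
        have := (hqp 0 le_rfl).2
        norm_num at this
        push_cast
        linarith
    | succ K ih =>
        obtain ⟨M, hM0, hMK⟩ := ih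
        obtain ⟨k, hkM, hk1, hk2⟩ := hba2 (M + 1)
        refine ⟨k, by linarith, ?_⟩
        have hr := hq k hk1
        have hmono := hrmono M hM0 (k - 1) (by linarith)
        rw [show k - 1 + 1 = k from by ring, show k - 1 - 1 = k - 2 from by ring] at hmono
        have hqk1 := (hqp (k - 1) (by linarith)).1
        rw [hr]
        push_cast
        nlinarith [mul_nonneg (by linarith : (0:ℤ) ≤ b k + a (k + 1) - 2)
          (by linarith : (0:ℤ) ≤ q (k - 1))]
  have hrdiv' : ∀ K : ℤ, ∃ M : ℤ, 0 ≤ M ∧ K ≤ q M + a (M + 1) * q (M - 1) := by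
    intro K
    obtain ⟨M, h0, h1⟩ := hrdiv K.toNat
    exact ⟨M, h0, le_trans (Int.self_le_toNat K) h1⟩
  -- the key approximation bound
  have key : ∀ n : ℤ, 0 ≤ n →
      |α - (p n : ℝ) / (q n : ℝ)|
        ≤ 1 / ((q n : ℝ) * ((q n + a (n + 1) * q (n - 1) : ℤ) : ℝ)) := by
    intro n hn
    obtain ⟨hqn, hrn⟩ := hqp n hn
    have hd := srcf_det a b p q ha hpm1 hp0 hp hqm1 hq0 hq n hn
    set ε : ℤ := p (n + 1) * q n - p n * q (n + 1) with hε
    set Qf : ℤ → ℤ := fun m => ε * (p m * q n - p n * q m) with hQf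
    have hQ0' : Qf n = 0 := by simp [hQf]
    have hQ1' : Qf (n + 1) = 1 := by
      show ε * (p (n + 1) * q n - p n * q (n + 1)) = 1
      rw [← hε]
      rcases hd with h | h <;> rw [h] <;> norm_num
    have hQrec' : ∀ m : ℤ, n + 2 ≤ m → Qf m = b m * Qf (m - 1) + a m * Qf (m - 2) := by
      intro m hm
      show ε * _ = b m * (ε * _) + a m * (ε * _)
      rw [hp m (by linarith), hq m (by linarith)]
      ring
    have hQpos := srcf_pos a b Qf n hb hba (by linarith) hQ0' hQ1' hQrec'
    have hcmp := srcf_cmp a b q Qf n hb hba hn hq (by linarith) hQ0' hQ1' hQrec'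
    -- bound for natural indices
    have hbnd : ∀ k : ℕ, n + 1 ≤ (k : ℤ) →
        |(p k : ℝ) / (q k : ℝ) - (p n : ℝ) / (q n : ℝ)|
          ≤ 1 / ((q n : ℝ) * ((q n + a (n + 1) * q (n - 1) : ℤ) : ℝ)) := by
      intro k hk
      have h1 := (hcmp (k : ℤ) hk).1
      have hQk1 := (hQpos (k : ℤ) hk).1
      have hqk := (hqp (k : ℤ) (by linarith)).1
      have habs : |p (k : ℤ) * q n - p n * q (k : ℤ)| * (q n + a (n + 1) * q (n - 1))
          ≤ q (k : ℤ) := by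
        have hQval : Qf (k : ℤ) = ε * (p (k : ℤ) * q n - p n * q (k : ℤ)) := rfl
        have heps : |ε| = 1 := by rcases hd with h | h <;> rw [h] <;> norm_num
        have h2 : |p (k : ℤ) * q n - p n * q (k : ℤ)| = Qf (k : ℤ) := by
          rw [hQval]
          calc |p (k : ℤ) * q n - p n * q (k : ℤ)|
              = |ε| * |p (k : ℤ) * q n - p n * q (k : ℤ)| := by rw [heps, one_mul]
            _ = |ε * (p (k : ℤ) * q n - p n * q (k : ℤ))| := (abs_mul _ _).symm
            _ = ε * (p (k : ℤ) * q n - p n * q (k : ℤ)) := by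
                rw [abs_of_nonneg]
                rw [hQval] at hQk1
                linarith
        rw [h2]
        exact h1
      -- pass to ℝ
      have hA : (1:ℝ) ≤ (q n : ℝ) := by exact_mod_cast hqn
      have hB : (1:ℝ) ≤ (q (k : ℤ) : ℝ) := by exact_mod_cast hqk
      have hR : (1:ℝ) ≤ ((q n + a (n + 1) * q (n - 1) : ℤ) : ℝ) := by exact_mod_cast hrn
      have habsR : |(p (k : ℤ) : ℝ) * (q n : ℝ) - (p n : ℝ) * (q (k : ℤ) : ℝ)|
          * ((q n + a (n + 1) * q (n - 1) : ℤ) : ℝ) ≤ (q (k : ℤ) : ℝ) := by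
        exact_mod_cast habs
      have hne1 : (q (k : ℤ) : ℝ) ≠ 0 := by linarith
      have hne2 : (q n : ℝ) ≠ 0 := by linarith
      have heq : (p (k : ℤ) : ℝ) / (q (k : ℤ) : ℝ) - (p n : ℝ) / (q n : ℝ)
          = ((p (k : ℤ) : ℝ) * (q n : ℝ) - (p n : ℝ) * (q (k : ℤ) : ℝ))
            / ((q (k : ℤ) : ℝ) * (q n : ℝ)) := by
        field_simp
      rw [heq, abs_div, abs_of_pos (by positivity : (0:ℝ) < (q (k : ℤ) : ℝ) * (q n : ℝ)),
        div_le_div_iff₀ (by positivity) (by positivity)]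
      nlinarith [abs_nonneg ((p (k : ℤ) : ℝ) * (q n : ℝ) - (p n : ℝ) * (q (k : ℤ) : ℝ)),
        mul_le_mul_of_nonneg_right habsR (by linarith : (0:ℝ) ≤ (q n : ℝ))]
    have hlim : Filter.Tendsto
        (fun k : ℕ => |(p (k : ℤ) : ℝ) / (q (k : ℤ) : ℝ) - (p n : ℝ) / (q n : ℝ)|)
        Filter.atTop (nhds |α - (p n : ℝ) / (q n : ℝ)|) := by
      have := (hconv.sub_const ((p n : ℝ) / (q n : ℝ))).abs
      simpa using this
    refine le_of_tendsto hlim ?_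
    filter_upwards [Filter.eventually_atTop.2 ⟨(n + 1).toNat, fun k hk => hk⟩] with k hk
    exact hbnd k (Int.toNat_le.mp hk)
  -- suppose α is rational
  rintro ⟨x, hx⟩
  set u : ℤ := x.num with hu
  set v : ℤ := (x.den : ℤ) with hv
  have hv1 : (1:ℤ) ≤ v := by
    have := x.pos
    omega
  have hαuv : α = (u : ℝ) / (v : ℝ) := by
    rw [← hx, Rat.cast_def, hu, hv]
    push_cast
    ring
  obtain ⟨M, hM0, hMr⟩ := hrdiv' (v + 1)
  have hzero : ∀ m : ℤ, M ≤ m → u * q m - v * p m = 0 := by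
    intro m hm
    have hm0 : (0:ℤ) ≤ m := le_trans hM0 hm
    have hrm : v + 1 ≤ q m + a (m + 1) * q (m - 1) :=
      le_trans hMr (hrmono M hM0 m hm)
    have hk := key m hm0
    have hqm := (hqp m hm0).1
    have hqmR : (1:ℝ) ≤ (q m : ℝ) := by exact_mod_cast hqm
    have hvR : (1:ℝ) ≤ (v : ℝ) := by exact_mod_cast hv1
    have hrmR : (v : ℝ) + 1 ≤ ((q m + a (m + 1) * q (m - 1) : ℤ) : ℝ) := by
      exact_mod_cast hrm
    have hne : (q m : ℝ) ≠ 0 := by linarith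
    have hvne : (v : ℝ) ≠ 0 := by linarith
    have heq : ((u * q m - v * p m : ℤ) : ℝ)
        = (v : ℝ) * (q m : ℝ) * (α - (p m : ℝ) / (q m : ℝ)) := by
      push_cast
      rw [hαuv]
      field_simp
    have hlt : |((u * q m - v * p m : ℤ) : ℝ)| < 1 := by
      rw [heq, abs_mul, abs_of_pos (by positivity : (0:ℝ) < (v : ℝ) * (q m : ℝ))]
      have hb1 : |α - (p m : ℝ) / (q m : ℝ)|
          ≤ 1 / ((q m : ℝ) * ((q m + a (m + 1) * q (m - 1) : ℤ) : ℝ)) := hk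
      have hRpos : (0:ℝ) < ((q m + a (m + 1) * q (m - 1) : ℤ) : ℝ) := by linarith
      calc (v : ℝ) * (q m : ℝ) * |α - (p m : ℝ) / (q m : ℝ)|
          ≤ (v : ℝ) * (q m : ℝ)
            * (1 / ((q m : ℝ) * ((q m + a (m + 1) * q (m - 1) : ℤ) : ℝ))) := by
            apply mul_le_mul_of_nonneg_left hb1
            positivity
        _ < 1 := by
            rw [mul_one_div, div_lt_one (by positivity)]
            nlinarith [mul_lt_mul_of_pos_left
              (show (v : ℝ) < ((q m + a (m + 1) * q (m - 1) : ℤ) : ℝ) by linarith)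
              (show (0:ℝ) < (q m : ℝ) by linarith)]
    have hlt' : |u * q m - v * p m| < 1 := by
      have := hlt
      rw [← Int.cast_abs] at this
      exact_mod_cast this
    exact Int.abs_lt_one_iff.mp hlt'
  have h0 := hzero M le_rfl
  have h1 := hzero (M + 1) (by linarith)
  have e0 : u * q M = v * p M := by linarith
  have e1 : u * q (M + 1) = v * p (M + 1) := by linarith
  have hvd : v * (p (M + 1) * q M - p M * q (M + 1)) = 0 := by
    linear_combination q (M + 1) * e0 - q M * e1
  rcases srcf_det a b p q ha hpm1 hp0 hp hqm1 hq0 hq M hM0 with h | h <;>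
    rw [h] at hvd <;> omega
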